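/- Let n, r, s be integers with r ≥ 1, s ≥ 1 and r + s ≤ n. Let A₁ be a complex (r+1)×s matrix and A₂ a complex (n−r−s)×s matrix. Then the following are equivalent: (i) for every row vector v¹ ∈ ℂ^{r+1} and every row vector v³ ∈ ℂ^{n−r−s}, one has ‖v¹‖² ≥ ‖v¹·A₁ + v³·A₂‖² (norms being the standard Hermitian norms); (ii) A₂ = 0 and I_{r+1} − A₁·A₁* is positive semidefinite. -/

import Mathlib

open Matrix
open scoped ComplexOrder

lemma stmt8_key {m k : ℕ} (A : Matrix (Fin m) (Fin k) ℂ) (x : Fin m → ℂ) :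
    star x ⬝ᵥ ((A * Aᴴ) *ᵥ x) = ((∑ j, ‖(Matrix.vecMul (star x) A) j‖ ^ 2 : ℝ) : ℂ) := by
  have h1 : (A * Aᴴ) *ᵥ x = A *ᵥ (Aᴴ *ᵥ x) := by rw [Matrix.mulVec_mulVec]
  have h2 : Aᴴ *ᵥ x = star (Matrix.vecMul (star x) A) := by
    ext j
    simp [Matrix.mulVec, Matrix.vecMul, dotProduct, Matrix.conjTranspose_apply,
      Finset.sum_comm, map_sum, mul_comm]
  rw [h1, Matrix.dotProduct_mulVec, h2]
  simp only [dotProduct, Pi.star_apply, Complex.star_def, Complex.mul_conj]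
  push_cast
  congr 1
  ext j
  rw [Complex.normSq_eq_norm_sq]
  norm_cast

lemma stmt8_self {m : ℕ} (x : Fin m → ℂ) :
    star x ⬝ᵥ x = ((∑ i, ‖x i‖ ^ 2 : ℝ) : ℂ) := by
  simp only [dotProduct, Pi.star_apply, Complex.star_def]
  push_cast
  congr 1
  ext i
  rw [mul_comm, Complex.mul_conj, Complex.normSq_eq_norm_sq]
  norm_cast

theorem stmt_8 (n r s : ℕ) (hr : 1 ≤ r) (hs : 1 ≤ s) (hrsn : r + s ≤ n)
    (A₁ : Matrix (Fin (r + 1)) (Fin s) ℂ) (A₂ : Matrix (Fin (n - r - s)) (Fin s) ℂ) :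
    (∀ (v1 : Fin (r + 1) → ℂ) (v3 : Fin (n - r - s) → ℂ),
        (∑ j : Fin s, ‖(Matrix.vecMul v1 A₁ + Matrix.vecMul v3 A₂) j‖ ^ 2) ≤
          ∑ i : Fin (r + 1), ‖v1 i‖ ^ 2) ↔
      (A₂ = 0 ∧ ((1 : Matrix (Fin (r + 1)) (Fin (r + 1)) ℂ) - A₁ * A₁ᴴ).PosSemidef) := by
  constructor
  · intro h
    have hA2 : A₂ = 0 := by
      ext i j
      have := h 0 (Pi.single i 1)
      simp only [Matrix.zero_vecMul, zero_add] at this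
      have hle : ∑ j, ‖(Matrix.vecMul (Pi.single i 1) A₂) j‖ ^ 2 ≤ 0 := by
        simpa using this
      have hz : ∀ j, ‖(Matrix.vecMul (Pi.single i 1) A₂) j‖ ^ 2 = 0 := by
        intro j
        have hnn : ∀ j ∈ Finset.univ, (0:ℝ) ≤ ‖(Matrix.vecMul (Pi.single i 1) A₂) j‖ ^ 2 :=
          fun j _ => by positivity
        have := (Finset.sum_eq_zero_iff_of_nonneg hnn).mp
          (le_antisymm hle (Finset.sum_nonneg hnn)) j (Finset.mem_univ j)
        exact this
      have hv : Matrix.vecMul (Pi.single i 1) A₂ j = A₂ i j := by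
        simp [Matrix.vecMul, dotProduct, Pi.single_apply]
      have := hz j
      rw [hv, pow_eq_zero_iff (by norm_num), norm_eq_zero] at this
      simpa using this
    refine ⟨hA2, posSemidef_iff_dotProduct_mulVec.mpr ⟨?_, ?_⟩⟩
    · exact Matrix.IsHermitian.sub (Matrix.isHermitian_one)
        (Matrix.isHermitian_mul_conjTranspose_self A₁)
    · intro x
      have hineq := h (star x) 0
      rw [hA2] at hineq
      simp only [Matrix.vecMul_zero, add_zero] at hineq
      rw [Matrix.sub_mulVec, dotProduct_sub, Matrix.one_mulVec,
        stmt8_self, stmt8_key]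
      rw [← Complex.ofReal_sub]
      rw [Complex.zero_le_real]
      have hxs : ∑ i, ‖(star x) i‖ ^ 2 = ∑ i, ‖x i‖ ^ 2 := by
        congr 1; ext i; simp
      rw [← hxs]
      linarith [hineq]
  · rintro ⟨hA2, hpsd⟩
    intro v1 v3
    rw [hA2]
    simp only [Matrix.vecMul_zero, add_zero]
    have := (posSemidef_iff_dotProduct_mulVec.mp hpsd).2 (star v1)
    rw [Matrix.sub_mulVec, dotProduct_sub, Matrix.one_mulVec,
      stmt8_self, stmt8_key, star_star, ← Complex.ofReal_sub, Complex.zero_le_real] at this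
    have hxs : ∑ i, ‖(star v1) i‖ ^ 2 = ∑ i, ‖v1 i‖ ^ 2 := by
      congr 1; ext i; simp
    rw [hxs] at this
    linarith [this]
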